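/- Let ε ∈ [0,1] and ρ ∈ [0,1], let (X₁,Y₁) ~ P_{ε,ρ}, and let X₂ and Y₃ be standard normal random variables such that (X₁,Y₁), X₂, Y₃ are mutually independent. Then P(X₁ > X₂ and Y₁ > Y₃) = (1−ε)·(1/4) + ε·(1/4 + arcsin(ρ/2)/(2π)). -/

import Mathlib

open MeasureTheory ProbabilityTheory Real Filter Topology

noncomputable section

/-- The standard normal distribution on ℝ. -/
def stdGauss : Measure ℝ := gaussianReal 0 1

/-- Two independent standard normals. -/
def stdGauss2 : Measure (ℝ × ℝ) := stdGauss.prod stdGauss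


instance : IsProbabilityMeasure stdGauss := by
  unfold stdGauss; infer_instance

instance : IsProbabilityMeasure stdGauss2 := by
  unfold stdGauss2; infer_instance

instance : SigmaFinite stdGauss := by unfold stdGauss; infer_instance
instance : SigmaFinite stdGauss2 := by unfold stdGauss2; infer_instance

lemma stdGauss2_eq : stdGauss2 = (volume : Measure (ℝ × ℝ)).withDensity
    (fun p => gaussianPDF 0 1 p.1 * gaussianPDF 0 1 p.2) := by
  rw [stdGauss2]
  refine Measure.prod_eq fun s t hs ht => ?_
  rw [withDensity_apply _ (hs.prod ht), Measure.volume_eq_prod,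
    ← Measure.prod_restrict,
    lintegral_prod_mul ((measurable_gaussianPDF 0 1).aemeasurable)
      ((measurable_gaussianPDF 0 1).aemeasurable)]
  rw [stdGauss, gaussianReal_apply 0 one_ne_zero s, gaussianReal_apply 0 one_ne_zero t]

def rotF (c s : ℝ) : ℝ × ℝ → ℝ × ℝ := fun p => (c * p.1 - s * p.2, s * p.1 + c * p.2)

lemma rotF_measurable (c s : ℝ) : Measurable (rotF c s) := by
  unfold rotF; fun_prop

lemma gpdf_mul (a b : ℝ) : gaussianPDFReal 0 1 a * gaussianPDFReal 0 1 b
    = (Real.sqrt (2 * π))⁻¹ ^ 2 * Real.exp (-(a ^ 2 + b ^ 2) / 2) := by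
  simp only [gaussianPDFReal, NNReal.coe_one, mul_one, sub_zero]
  rw [mul_mul_mul_comm, ← Real.exp_add, ← sq]
  congr 1
  ring

lemma gpdf2_measurable : Measurable (fun q : ℝ × ℝ => gaussianPDF 0 1 q.1 * gaussianPDF 0 1 q.2) :=
  ((measurable_gaussianPDF 0 1).comp measurable_fst).mul
    ((measurable_gaussianPDF 0 1).comp measurable_snd)

lemma map_rotF_volume (c s : ℝ) (h : c ^ 2 + s ^ 2 = 1) :
    Measure.map (rotF c s) (volume : Measure (ℝ × ℝ)) = volume := by
  have hdet : LinearMap.det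
      (Matrix.toLin (Module.Basis.finTwoProd ℝ) (Module.Basis.finTwoProd ℝ) !![c, -s; s, c]) = 1 := by
    rw [LinearMap.det_toLin, Matrix.det_fin_two_of]
    nlinarith [h]
  have h2 := Measure.map_linearMap_addHaar_eq_smul_addHaar (volume : Measure (ℝ × ℝ))
    (f := Matrix.toLin (Module.Basis.finTwoProd ℝ) (Module.Basis.finTwoProd ℝ) !![c, -s; s, c])
    (by rw [hdet]; norm_num)
  rw [hdet] at h2
  simp only [inv_one, abs_one, ENNReal.ofReal_one, one_smul] at h2
  have hfn : ⇑(Matrix.toLin (Module.Basis.finTwoProd ℝ) (Module.Basis.finTwoProd ℝ) !![c, -s; s, c])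
      = rotF c s := by
    funext p
    rw [show p = (p.1, p.2) from rfl, Matrix.toLin_finTwoProd_apply]
    simp only [rotF, neg_mul, ← sub_eq_add_neg]
  rwa [hfn] at h2

lemma rotF_preserves (c s : ℝ) (h : c ^ 2 + s ^ 2 = 1) :
    Measure.map (rotF c s) stdGauss2 = stdGauss2 := by
  ext A hA
  rw [Measure.map_apply (rotF_measurable c s) hA, stdGauss2_eq,
    withDensity_apply _ ((rotF_measurable c s) hA), withDensity_apply _ hA]
  have key : ∀ p : ℝ × ℝ, (fun q : ℝ × ℝ => gaussianPDF 0 1 q.1 * gaussianPDF 0 1 q.2) (rotF c s p)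
      = gaussianPDF 0 1 p.1 * gaussianPDF 0 1 p.2 := by
    intro p
    have hsum : (rotF c s p).1 ^ 2 + (rotF c s p).2 ^ 2 = p.1 ^ 2 + p.2 ^ 2 := by
      simp only [rotF]; nlinarith [h]
    simp only [gaussianPDF_def,
      ← ENNReal.ofReal_mul (gaussianPDFReal_nonneg 0 1 _), gpdf_mul, hsum]
  calc ∫⁻ p in rotF c s ⁻¹' A, gaussianPDF 0 1 p.1 * gaussianPDF 0 1 p.2 ∂volume
      = ∫⁻ p in rotF c s ⁻¹' A,
          (fun q : ℝ × ℝ => gaussianPDF 0 1 q.1 * gaussianPDF 0 1 q.2) (rotF c s p) ∂volume := by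
        congr 1; funext p; exact (key p).symm
    _ = ∫⁻ q in A, gaussianPDF 0 1 q.1 * gaussianPDF 0 1 q.2 ∂volume := by
        have h3 := setLIntegral_map (μ := (volume : Measure (ℝ × ℝ)))
          (f := fun q : ℝ × ℝ => gaussianPDF 0 1 q.1 * gaussianPDF 0 1 q.2) hA
          gpdf2_measurable (rotF_measurable c s)
        rw [map_rotF_volume c s h] at h3
        exact h3.symm

lemma map_fst_stdGauss2 : Measure.map Prod.fst stdGauss2 = stdGauss := by
  rw [stdGauss2, Measure.map_fst_prod]
  simp

lemma combo2 (a b : ℝ) (h : a ^ 2 + b ^ 2 = 1) :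
    Measure.map (fun p : ℝ × ℝ => a * p.1 + b * p.2) stdGauss2 = stdGauss := by
  have hfun : (fun p : ℝ × ℝ => a * p.1 + b * p.2) = Prod.fst ∘ rotF a (-b) := by
    funext p; simp only [Function.comp, rotF]; ring
  rw [hfun, ← Measure.map_map measurable_fst (rotF_measurable a (-b)),
    rotF_preserves a (-b) (by nlinarith), map_fst_stdGauss2]

lemma combo3 (c₁ c₂ c₃ : ℝ) (h23 : 0 < c₂ ^ 2 + c₃ ^ 2)
    (hsum : c₁ ^ 2 + c₂ ^ 2 + c₃ ^ 2 = 1) :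
    Measure.map (fun q : ℝ × (ℝ × ℝ) => c₁ * q.1 + c₂ * q.2.1 + c₃ * q.2.2)
      (stdGauss.prod stdGauss2) = stdGauss := by
  set m : ℝ := Real.sqrt (c₂ ^ 2 + c₃ ^ 2) with hm_def
  have hm : 0 < m := Real.sqrt_pos.2 h23
  have hm2 : m ^ 2 = c₂ ^ 2 + c₃ ^ 2 := Real.sq_sqrt h23.le
  have hg : Measure.map (fun q : ℝ × ℝ => (c₂ / m) * q.1 + (c₃ / m) * q.2) stdGauss2
      = stdGauss := by
    refine combo2 _ _ ?_
    field_simp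
    linarith [hm2]
  have hfun : (fun q : ℝ × (ℝ × ℝ) => c₁ * q.1 + c₂ * q.2.1 + c₃ * q.2.2)
      = (fun p : ℝ × ℝ => c₁ * p.1 + m * p.2)
        ∘ (Prod.map id (fun q : ℝ × ℝ => (c₂ / m) * q.1 + (c₃ / m) * q.2)) := by
    funext q
    simp only [Function.comp, Prod.map, id]
    field_simp
    ring
  have hmble : Measurable (fun q : ℝ × ℝ => (c₂ / m) * q.1 + (c₃ / m) * q.2) := by fun_prop
  rw [hfun, ← Measure.map_map (by fun_prop) (measurable_id.prodMap hmble),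
    ← Measure.map_prod_map _ _ measurable_id hmble, Measure.map_id, hg,
    show stdGauss.prod stdGauss = stdGauss2 from rfl]
  exact combo2 c₁ m (by linarith [hm2])

def shuffle : (ℝ × ℝ) × (ℝ × ℝ) → (ℝ × ℝ) × (ℝ × ℝ) :=
  fun w => ((w.1.1, w.2.1), (w.1.2, w.2.2))

lemma shuffle_measurable : Measurable shuffle := by unfold shuffle; fun_prop

lemma shuffle_preserves :
    Measure.map shuffle (stdGauss2.prod stdGauss2) = stdGauss2.prod stdGauss2 := by
  have g := stdGauss
  have i1 : MeasurePreserving (MeasurableEquiv.prodAssoc.symm :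
        ℝ × (ℝ × ℝ) ≃ᵐ (ℝ × ℝ) × ℝ) (stdGauss.prod (stdGauss.prod stdGauss))
        ((stdGauss.prod stdGauss).prod stdGauss) :=
    (measurePreserving_prodAssoc stdGauss stdGauss stdGauss).symm MeasurableEquiv.prodAssoc
  have i2 : MeasurePreserving (Prod.map (Prod.swap : ℝ × ℝ → ℝ × ℝ) (id : ℝ → ℝ))
      ((stdGauss.prod stdGauss).prod stdGauss) ((stdGauss.prod stdGauss).prod stdGauss) :=
    Measure.measurePreserving_swap.prod (MeasurePreserving.id stdGauss)
  have i3 : MeasurePreserving (MeasurableEquiv.prodAssoc :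
        (ℝ × ℝ) × ℝ ≃ᵐ ℝ × (ℝ × ℝ)) ((stdGauss.prod stdGauss).prod stdGauss)
        (stdGauss.prod (stdGauss.prod stdGauss)) :=
    measurePreserving_prodAssoc stdGauss stdGauss stdGauss
  have inner : MeasurePreserving
      (⇑MeasurableEquiv.prodAssoc ∘ Prod.map (Prod.swap : ℝ × ℝ → ℝ × ℝ) (id : ℝ → ℝ)
        ∘ ⇑(MeasurableEquiv.prodAssoc.symm : ℝ × (ℝ × ℝ) ≃ᵐ (ℝ × ℝ) × ℝ))
      (stdGauss.prod (stdGauss.prod stdGauss)) (stdGauss.prod (stdGauss.prod stdGauss)) :=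
    i3.comp (i2.comp i1)
  have m1 : MeasurePreserving (MeasurableEquiv.prodAssoc :
        (ℝ × ℝ) × (ℝ × ℝ) ≃ᵐ ℝ × (ℝ × (ℝ × ℝ)))
      ((stdGauss.prod stdGauss).prod (stdGauss.prod stdGauss))
      (stdGauss.prod (stdGauss.prod (stdGauss.prod stdGauss))) :=
    measurePreserving_prodAssoc stdGauss stdGauss (stdGauss.prod stdGauss)
  have m2 : MeasurePreserving (Prod.map (id : ℝ → ℝ)
        (⇑MeasurableEquiv.prodAssoc ∘ Prod.map (Prod.swap : ℝ × ℝ → ℝ × ℝ) (id : ℝ → ℝ)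
          ∘ ⇑(MeasurableEquiv.prodAssoc.symm : ℝ × (ℝ × ℝ) ≃ᵐ (ℝ × ℝ) × ℝ)))
      (stdGauss.prod (stdGauss.prod (stdGauss.prod stdGauss)))
      (stdGauss.prod (stdGauss.prod (stdGauss.prod stdGauss))) :=
    (MeasurePreserving.id stdGauss).prod inner
  have m3 : MeasurePreserving ((MeasurableEquiv.prodAssoc
        : (ℝ × ℝ) × (ℝ × ℝ) ≃ᵐ ℝ × (ℝ × (ℝ × ℝ))).symm)
      (stdGauss.prod (stdGauss.prod (stdGauss.prod stdGauss)))
      ((stdGauss.prod stdGauss).prod (stdGauss.prod stdGauss)) :=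
    (measurePreserving_prodAssoc stdGauss stdGauss (stdGauss.prod stdGauss)).symm _
  have total := m3.comp (m2.comp m1)
  have hfun : (⇑(MeasurableEquiv.prodAssoc
        : (ℝ × ℝ) × (ℝ × ℝ) ≃ᵐ ℝ × (ℝ × (ℝ × ℝ))).symm
      ∘ (Prod.map (id : ℝ → ℝ)
        (⇑MeasurableEquiv.prodAssoc ∘ Prod.map (Prod.swap : ℝ × ℝ → ℝ × ℝ) (id : ℝ → ℝ)
          ∘ ⇑(MeasurableEquiv.prodAssoc.symm : ℝ × (ℝ × ℝ) ≃ᵐ (ℝ × ℝ) × ℝ)))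
      ∘ ⇑(MeasurableEquiv.prodAssoc : (ℝ × ℝ) × (ℝ × ℝ) ≃ᵐ ℝ × (ℝ × (ℝ × ℝ)))) = shuffle := by
    funext w
    rfl
  have := total.map_eq
  rw [hfun] at this
  exact this

/-- `N(0, Σ_ρ)`: the centered bivariate normal with unit marginal variances and
correlation `ρ`, i.e. the law of `(Z₁, ρ Z₁ + √(1-ρ²) Z₂)` for independent standard
normal `Z₁, Z₂`. -/
def biNormal (ρ : ℝ) : Measure (ℝ × ℝ) :=
  stdGauss2.map fun z => (z.1, ρ * z.1 + Real.sqrt (1 - ρ ^ 2) * z.2)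

/-- The contamination mixture `P_{ε,ρ} = (1-ε) N(0,Σ₀) + ε N(0,Σ_ρ)`. -/
def mixture (ε ρ : ℝ) : Measure (ℝ × ℝ) :=
  ENNReal.ofReal (1 - ε) • biNormal 0 + ENNReal.ofReal ε • biNormal ρ

/-- The `n`-fold product (i.i.d.) measure. -/
def iid (n : ℕ) (μ : Measure (ℝ × ℝ)) : Measure (Fin n → ℝ × ℝ) :=
  Measure.pi fun _ => μ


lemma map_G (ρ : ℝ) (h0 : 0 ≤ ρ) (h1 : ρ ≤ 1) :
    Measure.map (fun w : (ℝ × ℝ) × (ℝ × ℝ) =>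
        ((w.1.1 - w.2.1) / Real.sqrt 2,
          (ρ * w.1.1 + Real.sqrt (1 - ρ ^ 2) * w.1.2 - w.2.2) / Real.sqrt 2))
      (stdGauss2.prod stdGauss2) = biNormal (ρ / 2) := by
  have h2 : (0:ℝ) < Real.sqrt 2 := Real.sqrt_pos.2 (by norm_num)
  have hc2 : ((Real.sqrt 2)⁻¹) ^ 2 = 1 / 2 := by
    rw [inv_pow, Real.sq_sqrt (by norm_num : (0:ℝ) ≤ 2)]; norm_num
  have hc0 : (0:ℝ) < (Real.sqrt 2)⁻¹ := inv_pos.2 h2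
  set s : ℝ := Real.sqrt (1 - ρ ^ 2) with hs_def
  have hs2 : s ^ 2 = 1 - ρ ^ 2 := Real.sq_sqrt (by nlinarith)
  set s' : ℝ := Real.sqrt (1 - (ρ / 2) ^ 2) with hs'_def
  have hs'2 : s' ^ 2 = 1 - (ρ / 2) ^ 2 := Real.sq_sqrt (by nlinarith)
  have hs' : 0 < s' := Real.sqrt_pos.2 (by nlinarith)
  have hFm : Measurable (fun q : ℝ × (ℝ × ℝ) =>
      (ρ / 2 / s') * q.1 + (s * (Real.sqrt 2)⁻¹ / s') * q.2.1
        + (-(Real.sqrt 2)⁻¹ / s') * q.2.2) := by fun_prop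
  have hfun : (fun w : (ℝ × ℝ) × (ℝ × ℝ) =>
        ((w.1.1 - w.2.1) / Real.sqrt 2,
          (ρ * w.1.1 + s * w.1.2 - w.2.2) / Real.sqrt 2))
      = (fun p : ℝ × ℝ => (p.1, ρ / 2 * p.1 + s' * p.2))
        ∘ (Prod.map (id : ℝ → ℝ) (fun q : ℝ × (ℝ × ℝ) =>
            (ρ / 2 / s') * q.1 + (s * (Real.sqrt 2)⁻¹ / s') * q.2.1
              + (-(Real.sqrt 2)⁻¹ / s') * q.2.2))
        ∘ ⇑(MeasurableEquiv.prodAssoc : (ℝ × ℝ) × (ℝ × ℝ) ≃ᵐ ℝ × (ℝ × (ℝ × ℝ)))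
        ∘ (Prod.map (rotF (Real.sqrt 2)⁻¹ (Real.sqrt 2)⁻¹) (id : ℝ × ℝ → ℝ × ℝ))
        ∘ shuffle := by
    funext w
    simp only [Function.comp_apply, Prod.map, id, shuffle, rotF,
      MeasurableEquiv.prodAssoc, MeasurableEquiv.coe_mk, Equiv.prodAssoc_apply]
    rw [Prod.ext_iff]
    constructor
    · simp only
      field_simp
    · simp only
      field_simp
      ring
  rw [hfun,
    ← Measure.map_map (g := fun p : ℝ × ℝ => (p.1, ρ / 2 * p.1 + s' * p.2)) (by fun_prop)
      ((measurable_id.prodMap hFm).comp ((MeasurableEquiv.prodAssoc.measurable).comp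
        (((rotF_measurable _ _).prodMap measurable_id).comp shuffle_measurable))),
    ← Measure.map_map (measurable_id.prodMap hFm)
      ((MeasurableEquiv.prodAssoc.measurable).comp
        (((rotF_measurable _ _).prodMap measurable_id).comp shuffle_measurable)),
    ← Measure.map_map (MeasurableEquiv.prodAssoc.measurable)
      (((rotF_measurable _ _).prodMap measurable_id).comp shuffle_measurable),
    ← Measure.map_map ((rotF_measurable _ _).prodMap measurable_id) shuffle_measurable,
    shuffle_preserves,
    ← Measure.map_prod_map _ _ (rotF_measurable _ _) measurable_id,
    rotF_preserves _ _ (by rw [hc2]; norm_num), Measure.map_id]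
  have hassoc : Measure.map (⇑(MeasurableEquiv.prodAssoc
        : (ℝ × ℝ) × (ℝ × ℝ) ≃ᵐ ℝ × (ℝ × (ℝ × ℝ)))) (stdGauss2.prod stdGauss2)
      = stdGauss.prod (stdGauss.prod stdGauss2) :=
    (measurePreserving_prodAssoc stdGauss stdGauss stdGauss2).map_eq
  rw [hassoc, ← Measure.map_prod_map _ _ measurable_id hFm, Measure.map_id]
  have h23 : 0 < (s * (Real.sqrt 2)⁻¹ / s') ^ 2 + (-(Real.sqrt 2)⁻¹ / s') ^ 2 := by
    have hpos : (0:ℝ) < (-(Real.sqrt 2)⁻¹ / s') ^ 2 := by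
      have hlt : -(Real.sqrt 2)⁻¹ / s' < 0 := div_neg_of_neg_of_pos (by linarith) hs'
      nlinarith [hlt]
    nlinarith [sq_nonneg (s * (Real.sqrt 2)⁻¹ / s')]
  have hsum : (ρ / 2 / s') ^ 2 + (s * (Real.sqrt 2)⁻¹ / s') ^ 2
      + (-(Real.sqrt 2)⁻¹ / s') ^ 2 = 1 := by
    have hre : (ρ / 2 / s') ^ 2 + (s * (Real.sqrt 2)⁻¹ / s') ^ 2 + (-(Real.sqrt 2)⁻¹ / s') ^ 2
        = ((ρ / 2) ^ 2 + s ^ 2 * ((Real.sqrt 2)⁻¹) ^ 2 + ((Real.sqrt 2)⁻¹) ^ 2) / s' ^ 2 := by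
      ring
    have hden : (1 - (ρ / 2) ^ 2) ≠ 0 := by nlinarith [hs', hs'2]
    rw [hre, hc2, hs2, hs'2, div_eq_one_iff_eq hden]
    ring
  rw [combo3 _ _ _ h23 hsum, show stdGauss.prod stdGauss = stdGauss2 from rfl]
  rfl

lemma radial_integral : ∫ x in Set.Ioi (0:ℝ), x * Real.exp (-x ^ 2 / 2) = 1 := by
  have hderiv : ∀ x ∈ Set.Ioi (0:ℝ),
      HasDerivAt (fun y : ℝ => -Real.exp (-y ^ 2 / 2)) (x * Real.exp (-x ^ 2 / 2)) x := by
    intro x _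
    have h1 : HasDerivAt (fun y : ℝ => -y ^ 2 / 2) (-x) x := by
      have h := ((hasDerivAt_pow 2 x).neg).div_const 2
      refine h.congr_deriv ?_
      norm_num
      ring
    have h2 := (h1.exp).neg
    refine h2.congr_deriv ?_
    ring
  have hint : IntegrableOn (fun x : ℝ => x * Real.exp (-x ^ 2 / 2)) (Set.Ioi 0) := by
    have h := (integrable_mul_exp_neg_mul_sq (b := 1/2) (by norm_num)).integrableOn
      (s := Set.Ioi (0:ℝ))
    refine h.congr_fun (fun x _ => by beta_reduce; rw [show -(1/2 : ℝ) * x ^ 2 = -x ^ 2 / 2 by ring]) measurableSet_Ioi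
  have hb : Filter.Tendsto (fun y : ℝ => -y ^ 2 / 2) Filter.atTop Filter.atBot := by
    have h1 : Filter.Tendsto (fun y : ℝ => y ^ 2 / 2) Filter.atTop Filter.atTop :=
      (tendsto_pow_atTop (two_ne_zero)).atTop_div_const (by norm_num)
    have h2 := tendsto_neg_atTop_atBot.comp h1
    convert h2 using 2 with y
    simp [Function.comp]
    ring
  have htend : Filter.Tendsto (fun y : ℝ => -Real.exp (-y ^ 2 / 2)) Filter.atTop (𝓝 0) := by
    rw [show (0:ℝ) = -0 by norm_num]
    exact (Real.tendsto_exp_atBot.comp hb).neg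
  have hcont : ContinuousWithinAt (fun y : ℝ => -Real.exp (-y ^ 2 / 2)) (Set.Ici 0) 0 :=
    (Continuous.continuousWithinAt (by continuity))
  have hfin := MeasureTheory.integral_Ioi_of_hasDerivAt_of_tendsto hcont hderiv hint htend
  rw [hfin]
  norm_num

lemma biNormal_quadrant (r : ℝ) (h0 : 0 ≤ r) (h1 : r < 1) :
    biNormal r {q : ℝ × ℝ | 0 < q.1 ∧ 0 < q.2}
      = ENNReal.ofReal (1 / 4 + Real.arcsin r / (2 * π)) := by
  have hs'pos : 0 < Real.sqrt (1 - r ^ 2) := Real.sqrt_pos.2 (by nlinarith)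
  set α : ℝ := Real.arcsin r with hα_def
  have hα0 : 0 ≤ α := Real.arcsin_nonneg.2 h0
  have hαlt : α < π / 2 := Real.arcsin_lt_pi_div_two.2 h1
  have hsin : Real.sin α = r := Real.sin_arcsin (by linarith) h1.le
  have hcos : Real.cos α = Real.sqrt (1 - r ^ 2) := Real.cos_arcsin r
  have hpi : 0 < π := Real.pi_pos
  have hQ : MeasurableSet {q : ℝ × ℝ | 0 < q.1 ∧ 0 < q.2} :=
    (measurableSet_lt measurable_const measurable_fst).inter
      (measurableSet_lt measurable_const measurable_snd)
  have hm2 : Measurable (fun p : ℝ × ℝ => r * p.1 + Real.sqrt (1 - r ^ 2) * p.2) := by fun_prop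
  have hQr : MeasurableSet {p : ℝ × ℝ | 0 < p.1 ∧
      0 < r * p.1 + Real.sqrt (1 - r ^ 2) * p.2} :=
    (measurableSet_lt measurable_const measurable_fst).inter
      (measurableSet_lt measurable_const hm2)
  have hmb : Measurable (fun z : ℝ × ℝ => (z.1, r * z.1 + Real.sqrt (1 - r ^ 2) * z.2)) := by
    fun_prop
  rw [biNormal, Measure.map_apply hmb hQ]
  have hpre : (fun z : ℝ × ℝ => (z.1, r * z.1 + Real.sqrt (1 - r ^ 2) * z.2)) ⁻¹'
      {q : ℝ × ℝ | 0 < q.1 ∧ 0 < q.2}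
      = {p : ℝ × ℝ | 0 < p.1 ∧ 0 < r * p.1 + Real.sqrt (1 - r ^ 2) * p.2} := rfl
  rw [hpre, stdGauss2_eq, withDensity_apply _ hQr]
  set f : ℝ × ℝ → ℝ := fun p => gaussianPDFReal 0 1 p.1 * gaussianPDFReal 0 1 p.2 with hf_def
  have hfint : Integrable f (volume : Measure (ℝ × ℝ)) := by
    rw [hf_def, Measure.volume_eq_prod]
    exact (integrable_gaussianPDFReal 0 1).mul_prod (integrable_gaussianPDFReal 0 1)
  have h1e : ∀ p : ℝ × ℝ, gaussianPDF 0 1 p.1 * gaussianPDF 0 1 p.2 = ENNReal.ofReal (f p) := by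
    intro p
    simp only [hf_def, gaussianPDF_def, ← ENNReal.ofReal_mul (gaussianPDFReal_nonneg 0 1 _)]
  rw [lintegral_congr h1e,
    ← MeasureTheory.ofReal_integral_eq_lintegral_ofReal hfint.integrableOn
      (Filter.Eventually.of_forall fun p =>
        mul_nonneg (gaussianPDFReal_nonneg 0 1 _) (gaussianPDFReal_nonneg 0 1 _))]
  congr 1
  set Qr : Set (ℝ × ℝ) := {p : ℝ × ℝ | 0 < p.1 ∧ 0 < r * p.1 + Real.sqrt (1 - r ^ 2) * p.2}
    with hQr_def
  set box : Set (ℝ × ℝ) := Set.Ioi (0:ℝ) ×ˢ Set.Ioo (-α) (π / 2) with hbox_def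
  set Fr : ℝ × ℝ → ℝ := fun q => (q.1 * Real.exp (-q.1 ^ 2 / 2)) * (2 * π)⁻¹ with hFr_def
  have hsub : box ⊆ polarCoord.target := by
    rw [polarCoord_target, hbox_def]
    exact Set.prod_mono subset_rfl
      (Set.Ioo_subset_Ioo (by linarith) (by linarith))
  have hboxm : MeasurableSet box := measurableSet_Ioi.prod measurableSet_Ioo
  have key : ∀ p ∈ polarCoord.target,
      p.1 • Qr.indicator f (polarCoord.symm p) = box.indicator Fr p := by
    intro p hp
    rw [polarCoord_target] at hp
    obtain ⟨hp1, hp2⟩ := hp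
    simp only [Set.mem_Ioi] at hp1
    simp only [Set.mem_Ioo] at hp2
    have hsymm : polarCoord.symm p = (p.1 * Real.cos p.2, p.1 * Real.sin p.2) := rfl
    have hmem : polarCoord.symm p ∈ Qr ↔ p ∈ box := by
      rw [hsymm, hQr_def, hbox_def]
      simp only [Set.mem_setOf_eq, Set.mem_prod, Set.mem_Ioi, Set.mem_Ioo]
      constructor
      · rintro ⟨ha, hb⟩
        have hcosθ : 0 < Real.cos p.2 := by
          by_contra hcc; push_neg at hcc
          nlinarith
        have hsinsum : 0 < Real.sin (α + p.2) := by
          rw [Real.sin_add, hsin, hcos]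
          by_contra hcc; push_neg at hcc
          nlinarith
        have hθlt : p.2 < π / 2 := by
          by_contra hge; push_neg at hge
          have := Real.cos_nonpos_of_pi_div_two_le_of_le hge (by linarith)
          linarith
        have hθgt' : -(π / 2) < p.2 := by
          by_contra hge; push_neg at hge
          have := Real.cos_nonpos_of_pi_div_two_le_of_le
            (by linarith : π / 2 ≤ -p.2) (by linarith : -p.2 ≤ π + π / 2)
          rw [Real.cos_neg] at this
          linarith
        have hθgtα : -α < p.2 := by
          by_contra hge; push_neg at hge
          have hs := Real.sin_nonpos_of_nonpos_of_neg_pi_le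
            (by linarith : α + p.2 ≤ 0) (by linarith : -π ≤ α + p.2)
          linarith
        exact ⟨hp1, hθgtα, hθlt⟩
      · rintro ⟨-, hθ1, hθ2⟩
        have hcosθ : 0 < Real.cos p.2 :=
          Real.cos_pos_of_mem_Ioo ⟨by linarith, hθ2⟩
        have hsin2 : 0 < Real.sin (α + p.2) :=
          Real.sin_pos_of_pos_of_lt_pi (by linarith) (by linarith)
        have hrw : r * Real.cos p.2 + Real.sqrt (1 - r ^ 2) * Real.sin p.2
            = Real.sin (α + p.2) := by
          rw [Real.sin_add, hsin, hcos]
        refine ⟨mul_pos hp1 hcosθ, ?_⟩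
        nlinarith [mul_pos hp1 hsin2]
    by_cases hmem2 : p ∈ box
    · rw [Set.indicator_of_mem hmem2, Set.indicator_of_mem (hmem.2 hmem2)]
      rw [hsymm, hf_def, hFr_def]
      simp only
      rw [gpdf_mul]
      have hRR : (p.1 * Real.cos p.2) ^ 2 + (p.1 * Real.sin p.2) ^ 2 = p.1 ^ 2 := by
        nlinarith [Real.sin_sq_add_cos_sq p.2]
      have h2π : ((Real.sqrt (2 * π))⁻¹) ^ 2 = (2 * π)⁻¹ := by
        rw [inv_pow, Real.sq_sqrt Real.two_pi_pos.le]
      rw [hRR, h2π, smul_eq_mul]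
      ring
    · rw [Set.indicator_of_notMem hmem2,
        Set.indicator_of_notMem (fun hc => hmem2 (hmem.1 hc)), smul_zero]
  calc ∫ p in Qr, f p ∂volume
      = ∫ p, Qr.indicator f p ∂volume := (integral_indicator hQr).symm
    _ = ∫ p in polarCoord.target, p.1 • Qr.indicator f (polarCoord.symm p) ∂volume :=
        (integral_comp_polarCoord_symm _).symm
    _ = ∫ p in polarCoord.target, box.indicator Fr p ∂volume :=
        MeasureTheory.setIntegral_congr_fun polarCoord.open_target.measurableSet key
    _ = ∫ p in polarCoord.target ∩ box, Fr p ∂volume :=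
        MeasureTheory.setIntegral_indicator hboxm
    _ = ∫ p in box, Fr p ∂volume := by
        rw [Set.inter_eq_self_of_subset_right hsub]
    _ = (∫ x in Set.Ioi (0:ℝ), x * Real.exp (-x ^ 2 / 2) ∂volume)
          * (∫ y in Set.Ioo (-α) (π / 2), (2 * π)⁻¹ ∂volume) := by
        rw [hbox_def, hFr_def, Measure.volume_eq_prod]
        exact MeasureTheory.setIntegral_prod_mul
          (fun x : ℝ => x * Real.exp (-x ^ 2 / 2)) (fun _ : ℝ => (2 * π)⁻¹) _ _
    _ = 1 / 4 + α / (2 * π) := by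
        rw [radial_integral, MeasureTheory.setIntegral_const, Real.volume_real_Ioo_of_le (by linarith)]
        rw [smul_eq_mul]
        field_simp
        ring


lemma hS_meas : MeasurableSet {w : (ℝ × ℝ) × ℝ × ℝ | w.2.1 < w.1.1 ∧ w.2.2 < w.1.2} :=
  (measurableSet_lt (measurable_fst.comp measurable_snd) (measurable_fst.comp measurable_fst)).inter
    (measurableSet_lt (measurable_snd.comp measurable_snd) (measurable_snd.comp measurable_fst))

lemma component_prob (ρ : ℝ) (h0 : 0 ≤ ρ) (h1 : ρ ≤ 1) :
    ((biNormal ρ).prod (stdGauss.prod stdGauss))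
        {w : (ℝ × ℝ) × ℝ × ℝ | w.2.1 < w.1.1 ∧ w.2.2 < w.1.2}
      = ENNReal.ofReal (1 / 4 + Real.arcsin (ρ / 2) / (2 * π)) := by
  have h2 : (0:ℝ) < Real.sqrt 2 := Real.sqrt_pos.2 (by norm_num)
  have hmb : Measurable (fun z : ℝ × ℝ => (z.1, ρ * z.1 + Real.sqrt (1 - ρ ^ 2) * z.2)) := by
    fun_prop
  have hprod : (biNormal ρ).prod (stdGauss.prod stdGauss)
      = Measure.map (Prod.map (fun z : ℝ × ℝ => (z.1, ρ * z.1 + Real.sqrt (1 - ρ ^ 2) * z.2))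
          (id : ℝ × ℝ → ℝ × ℝ)) (stdGauss2.prod stdGauss2) := by
    have h := Measure.map_prod_map stdGauss2 stdGauss2 hmb (measurable_id (α := ℝ × ℝ))
    rw [Measure.map_id] at h
    exact h
  rw [hprod, Measure.map_apply (hmb.prodMap measurable_id) hS_meas]
  have hG : Measurable (fun w : (ℝ × ℝ) × (ℝ × ℝ) =>
      ((w.1.1 - w.2.1) / Real.sqrt 2,
        (ρ * w.1.1 + Real.sqrt (1 - ρ ^ 2) * w.1.2 - w.2.2) / Real.sqrt 2)) := by fun_prop
  have hQm : MeasurableSet {q : ℝ × ℝ | 0 < q.1 ∧ 0 < q.2} :=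
    (measurableSet_lt measurable_const measurable_fst).inter
      (measurableSet_lt measurable_const measurable_snd)
  have hdiv : ∀ x : ℝ, 0 < x / Real.sqrt 2 ↔ 0 < x := by
    intro x
    constructor
    · intro h
      have h3 := mul_pos h h2
      rwa [div_mul_cancel₀ _ h2.ne'] at h3
    · intro h
      exact div_pos h h2
  have hpre : (Prod.map (fun z : ℝ × ℝ => (z.1, ρ * z.1 + Real.sqrt (1 - ρ ^ 2) * z.2))
        (id : ℝ × ℝ → ℝ × ℝ)) ⁻¹'
        {w : (ℝ × ℝ) × ℝ × ℝ | w.2.1 < w.1.1 ∧ w.2.2 < w.1.2}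
      = (fun w : (ℝ × ℝ) × (ℝ × ℝ) =>
          ((w.1.1 - w.2.1) / Real.sqrt 2,
            (ρ * w.1.1 + Real.sqrt (1 - ρ ^ 2) * w.1.2 - w.2.2) / Real.sqrt 2)) ⁻¹'
        {q : ℝ × ℝ | 0 < q.1 ∧ 0 < q.2} := by
    ext w
    simp only [Set.mem_preimage, Set.mem_setOf_eq, Prod.map, id]
    rw [hdiv, hdiv, sub_pos, sub_pos]
  rw [hpre, ← Measure.map_apply hG hQm, map_G ρ h0 h1]
  exact biNormal_quadrant (ρ / 2) (by linarith) (by linarith)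


/-- for `(X₁,Y₁) ~ P_{ε,ρ}` and independent standard normal `X₂, Y₃`
(all mutually independent, modeled by the product measure on `(ℝ×ℝ) × (ℝ×ℝ)` whose
second factor is `(X₂, Y₃)`),
`P(X₁ > X₂, Y₁ > Y₃) = (1-ε)/4 + ε(1/4 + arcsin(ρ/2)/(2π))`. -/

theorem spearman_kernel (ε ρ : ℝ) (hε : ε ∈ Set.Icc (0 : ℝ) 1) (hρ : ρ ∈ Set.Icc (0 : ℝ) 1) :
    (((mixture ε ρ).prod (stdGauss.prod stdGauss))
        {w : (ℝ × ℝ) × ℝ × ℝ | w.2.1 < w.1.1 ∧ w.2.2 < w.1.2}).toReal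
      = (1 - ε) * (1 / 4) + ε * (1 / 4 + Real.arcsin (ρ / 2) / (2 * π)) := by
  obtain ⟨hε0, hε1⟩ := hε
  obtain ⟨hρ0, hρ1⟩ := hρ
  have hpi : 0 < π := Real.pi_pos
  set S := {w : (ℝ × ℝ) × ℝ × ℝ | w.2.1 < w.1.1 ∧ w.2.2 < w.1.2} with hS_def
  have hsplit : ((mixture ε ρ).prod (stdGauss.prod stdGauss)) S
      = ENNReal.ofReal (1 - ε) * ((biNormal 0).prod (stdGauss.prod stdGauss)) S
        + ENNReal.ofReal ε * ((biNormal ρ).prod (stdGauss.prod stdGauss)) S := by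
    rw [mixture]
    rw [Measure.prod_apply hS_meas, Measure.prod_apply hS_meas, Measure.prod_apply hS_meas,
      lintegral_add_measure, lintegral_smul_measure, lintegral_smul_measure, smul_eq_mul, smul_eq_mul]
  have harc0 : Real.arcsin ((0:ℝ) / 2) = 0 := by norm_num [Real.arcsin_zero]
  have hA0 : (0:ℝ) ≤ 1 / 4 + Real.arcsin ((0:ℝ) / 2) / (2 * π) := by
    rw [harc0]; norm_num
  have hAρ : (0:ℝ) ≤ 1 / 4 + Real.arcsin (ρ / 2) / (2 * π) := by
    have := Real.arcsin_nonneg.2 (by linarith : (0:ℝ) ≤ ρ / 2)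
    positivity
  rw [hsplit, component_prob 0 le_rfl zero_le_one, component_prob ρ hρ0 hρ1,
    ← ENNReal.ofReal_mul (by linarith), ← ENNReal.ofReal_mul (by linarith),
    ← ENNReal.ofReal_add (by nlinarith) (by nlinarith),
    ENNReal.toReal_ofReal (by nlinarith)]
  rw [harc0]
  ring
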